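/- (Combinatorial content of the Constrained k-near Editing theorem.) Fix a bijection β : Q → {1,…,|Q|} with prefixes P_j = {β⁻¹(1),…,β⁻¹(j)}, an initial bijection α₀ : S → {1,…,|S|}, and k ∈ ℕ. The minimum cardinality of an edit set F ⊆ S × Q such that the edited graph (S ∪ Q, E △ F) satisfies the interval property with respect to β and admits a k-near nested ordering of the students equals the minimum, over all k-near bijections π : S → {1,…,|S|} and all nondecreasing threshold sequences 0 ≤ j₁ ≤ … ≤ j_{|S|} ≤ |Q|, of the sum over i = 1,…,|S| of |N(π⁻¹(i)) △ P_{j_i}|. -/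

import Mathlib

open Finset

/-- The neighborhood of a student `s` in the bipartite graph with edge set `E`. -/
def nbhd {S Q : Type*} [Fintype Q] [DecidableEq S] [DecidableEq Q]
    (E : Finset (S × Q)) (s : S) : Finset Q :=
  Finset.univ.filter fun q => (s, q) ∈ E

/-- The `j` easiest questions under the ordering `β` (`j ∈ {0, …, |Q|}`). -/
def prefixSet {Q : Type*} [Fintype Q] [DecidableEq Q]
    (β : Q ≃ Fin (Fintype.card Q)) (j : ℕ) : Finset Q :=
  Finset.univ.filter fun q => (β q : ℕ) < j

/-- `π` is a `k`-near ordering with respect to the initial ordering `α₀`. -/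
def kNear {S : Type*} [Fintype S] (α₀ π : S ≃ Fin (Fintype.card S)) (k : ℕ) : Prop :=
  ∀ s : S, ((π s : ℤ) - (α₀ s : ℤ)).natAbs ≤ k

lemma nbhd_symmDiff {S Q : Type*} [Fintype Q] [DecidableEq S] [DecidableEq Q]
    (E F : Finset (S × Q)) (s : S) :
    nbhd (symmDiff E F) s = symmDiff (nbhd E s) (nbhd F s) := by
  ext q; simp [nbhd, Finset.mem_symmDiff]

lemma card_prefixSet {Q : Type*} [Fintype Q] [DecidableEq Q]
    (β : Q ≃ Fin (Fintype.card Q)) {j : ℕ} (h : j ≤ Fintype.card Q) :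
    (prefixSet β j).card = j := by
  have : prefixSet β j = (((Finset.range j).attachFin
      (fun m hm => lt_of_lt_of_le (Finset.mem_range.mp hm) h)).map
      ⟨β.symm, β.symm.injective⟩) := by
    ext q
    simp only [prefixSet, Finset.mem_filter, Finset.mem_univ, true_and, Finset.mem_map,
      Finset.mem_attachFin, Finset.mem_range, Function.Embedding.coeFn_mk]
    constructor
    · intro hq; exact ⟨β q, hq, by simp⟩
    · rintro ⟨i, hi, rfl⟩; simpa using hi
  rw [this, Finset.card_map, Finset.card_attachFin, Finset.card_range]

lemma sum_card_nbhd {S Q : Type*} [Fintype S] [Fintype Q] [DecidableEq S] [DecidableEq Q]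
    (F : Finset (S × Q)) : ∑ s : S, (nbhd F s).card = F.card := by
  rw [Finset.card_eq_sum_card_fiberwise (f := Prod.fst) (t := Finset.univ)
    (fun x _ => Finset.mem_univ _)]
  refine Finset.sum_congr rfl fun s _ => ?_
  refine Finset.card_bij (fun q _ => (s, q)) ?_ ?_ ?_
  · intro q hq; simp [nbhd] at hq; simp [hq]
  · intro a _ b _ hab; simpa using hab
  · rintro ⟨a, b⟩ hb; simp at hb
    obtain ⟨h1, rfl⟩ := hb
    exact ⟨b, by simp [nbhd, h1], rfl⟩


/-- Combinatorial content of the Constrained `k`-near Editing theorem: the minimum number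
of edge edits after which the graph satisfies the interval property w.r.t. the fixed question
ordering `β` and admits a `k`-near nested student ordering equals the minimum over `k`-near
orderings `π` and nondecreasing threshold sequences of the total per-position editing cost. -/
theorem stmt6 {S Q : Type*} [Fintype S] [Fintype Q] [DecidableEq S] [DecidableEq Q]
    (E : Finset (S × Q)) (β : Q ≃ Fin (Fintype.card Q))
    (α₀ : S ≃ Fin (Fintype.card S)) (k : ℕ) :
    sInf {c : ℕ | ∃ F : Finset (S × Q), F.card = c ∧
        (∀ s : S, ∃ j ≤ Fintype.card Q, nbhd (symmDiff E F) s = prefixSet β j) ∧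
        (∃ π : S ≃ Fin (Fintype.card S), kNear α₀ π k ∧
          ∀ s₁ s₂ : S, π s₂ ≤ π s₁ →
            nbhd (symmDiff E F) s₂ ⊆ nbhd (symmDiff E F) s₁)} =
    sInf {c : ℕ | ∃ π : S ≃ Fin (Fintype.card S), kNear α₀ π k ∧
        ∃ j : Fin (Fintype.card S) → ℕ, Monotone j ∧ (∀ i, j i ≤ Fintype.card Q) ∧
          c = ∑ i : Fin (Fintype.card S),
            (symmDiff (nbhd E (π.symm i)) (prefixSet β (j i))).card} := by
  congr 1
  ext c
  constructor
  · rintro ⟨F, rfl, hint, π, hk, hnest⟩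
    refine ⟨π, hk, fun i => (nbhd (symmDiff E F) (π.symm i)).card, ?_, ?_, ?_⟩
    · intro i₁ i₂ h
      exact Finset.card_le_card (hnest _ _ (by simpa using h))
    · intro i
      obtain ⟨j, hj, hjeq⟩ := hint (π.symm i)
      dsimp only
      rw [hjeq, card_prefixSet β hj]; exact hj
    · have key : ∀ s : S, symmDiff (nbhd E s)
          (prefixSet β (nbhd (symmDiff E F) s).card) = nbhd F s := by
        intro s
        obtain ⟨j, hj, hjeq⟩ := hint s
        have : prefixSet β (nbhd (symmDiff E F) s).card = nbhd (symmDiff E F) s := by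
          rw [hjeq, card_prefixSet β hj]
        rw [this, nbhd_symmDiff, symmDiff_symmDiff_cancel_left]
      calc F.card = ∑ s : S, (nbhd F s).card := (sum_card_nbhd F).symm
        _ = ∑ i : Fin (Fintype.card S), (nbhd F (π.symm i)).card :=
          (Equiv.sum_comp π.symm fun s => (nbhd F s).card).symm
        _ = _ := by
          refine Finset.sum_congr rfl fun i _ => ?_
          rw [key (π.symm i)]
  · rintro ⟨π, hk, j, hmono, hle, rfl⟩
    set F : Finset (S × Q) := Finset.univ.filter
      (fun p : S × Q => p.2 ∈ symmDiff (nbhd E p.1) (prefixSet β (j (π p.1)))) with hF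
    have hnF : ∀ s : S, nbhd F s = symmDiff (nbhd E s) (prefixSet β (j (π s))) := by
      intro s; ext q; rw [nbhd, hF, Finset.mem_filter, Finset.mem_filter]; simp
    have hEF : ∀ s : S, nbhd (symmDiff E F) s = prefixSet β (j (π s)) := by
      intro s
      rw [nbhd_symmDiff, hnF s, symmDiff_symmDiff_cancel_left]
    refine ⟨F, ?_, fun s => ⟨j (π s), hle _, hEF s⟩, π, hk, ?_⟩
    · calc F.card = ∑ s : S, (nbhd F s).card := (sum_card_nbhd F).symm
        _ = ∑ i : Fin (Fintype.card S), (nbhd F (π.symm i)).card :=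
          (Equiv.sum_comp π.symm fun s => (nbhd F s).card).symm
        _ = _ := by
          refine Finset.sum_congr rfl fun i _ => ?_
          rw [hnF (π.symm i)]; simp
    · intro s₁ s₂ h
      rw [hEF s₁, hEF s₂]
      intro q hq
      simp only [prefixSet, Finset.mem_filter, Finset.mem_univ, true_and] at *
      exact lt_of_lt_of_le hq (hmono h)
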